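/- Let D be a loopless strict digraph with n vertices, girth g (length of its shortest directed cycle), and exactly t induced directed cycles. If t·g ≥ n, then α(D) ≥ ((g−1)/g)·(n^g/(t·g))^{1/(g−1)}. -/

import Mathlib

variable {V : Type*}

/-- A directed cycle in a digraph `D`, given as an injective map `Fin m → V`
(`m ≥ 2`) whose consecutive images (cyclically) are edges of `D`. -/
def IsCycleFun (D : V → V → Prop) {m : ℕ} (f : Fin m → V) : Prop :=
  2 ≤ m ∧ Function.Injective f ∧ ∀ i : Fin m, D (f i) (f (finRotate m i))

/-- The set `S` contains a directed cycle of `D`. -/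
def HasCycleIn (D : V → V → Prop) (S : Set V) : Prop :=
  ∃ (m : ℕ) (f : Fin m → V), IsCycleFun D f ∧ ∀ i, f i ∈ S

/-- Out-degree of a vertex. -/
noncomputable def outDeg (D : V → V → Prop) (v : V) : ℕ := Nat.card {u | D v u}

/-- In-degree of a vertex. -/
noncomputable def inDeg (D : V → V → Prop) (v : V) : ℕ := Nat.card {u | D u v}

/-- A coloring of the vertices of `D` with no monochromatic directed cycle. -/
def ProperColoring (D : V → V → Prop) {k : ℕ} (c : V → Fin k) : Prop :=
  ∀ (m : ℕ) (f : Fin m → V), IsCycleFun D f → ∃ i j, c (f i) ≠ c (f j)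

/-- The number of proper `k`-colorings of `D` (value of the dichromatic polynomial). -/
noncomputable def numColorings (V : Type*) (D : V → V → Prop) (k : ℕ) : ℕ :=
  Nat.card {c : V → Fin k // ProperColoring D c}

/-- The finset `S` carries a (Hamiltonian on `S`) directed cycle of `D`. -/
def IsCycleSet (D : V → V → Prop) (S : Finset V) : Prop :=
  2 ≤ S.card ∧ ∃ f : Fin S.card ≃ {x // x ∈ S},
    ∀ i, D (f i) (f (finRotate S.card i))

/-- The finset `S` induces exactly a directed cycle of `D`. -/
def IsInducedCycleSet (D : V → V → Prop) (S : Finset V) : Prop :=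
  2 ≤ S.card ∧ ∃ f : Fin S.card ≃ {x // x ∈ S},
    (∀ i, D (f i) (f (finRotate S.card i))) ∧
    ∀ a b : {x // x ∈ S}, D (a : V) b → ∃ i, f i = a ∧ f (finRotate S.card i) = b

/-- `D` has girth `g` : it has a directed cycle of length `g` and no shorter one. -/
def HasGirth (D : V → V → Prop) (g : ℕ) : Prop :=
  (∃ f : Fin g → V, IsCycleFun D f) ∧
    ∀ (m : ℕ) (f : Fin m → V), IsCycleFun D f → g ≤ m


open Finset in
lemma exists_induced_of_cycle (D : V → V → Prop) (hloopless : ∀ v, ¬ D v v)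
    (S : Set V) (h : HasCycleIn D S) :
    ∃ C : Finset V, IsInducedCycleSet D C ∧ ↑C ⊆ S := by
  classical
  have hex : ∃ m, ∃ f : Fin m → V, IsCycleFun D f ∧ ∀ i, f i ∈ S := h
  obtain ⟨m₀, ⟨f₀, hf₀, hf₀S⟩, hmin⟩ :
      ∃ m₀ : ℕ, (∃ f : Fin m₀ → V, IsCycleFun D f ∧ ∀ i, f i ∈ S) ∧
        ∀ m < m₀, ¬ ∃ f : Fin m → V, IsCycleFun D f ∧ ∀ i, f i ∈ S :=
    ⟨Nat.find hex, Nat.find_spec hex, fun m hm => Nat.find_min hex hm⟩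
  obtain ⟨m₁, rfl⟩ : ∃ k, m₀ = k + 1 := ⟨m₀ - 1, by have := hf₀.1; omega⟩
  set C : Finset V := Finset.image f₀ univ with hC
  have hinj := hf₀.2.1
  have hcard : C.card = m₁ + 1 := by
    rw [hC, Finset.card_image_of_injective _ hinj, Finset.card_univ, Fintype.card_fin]
  refine ⟨C, ?_, ?_⟩
  · rw [IsInducedCycleSet, hcard]
    have hmem : ∀ i, f₀ i ∈ C := fun i => Finset.mem_image_of_mem _ (Finset.mem_univ i)
    have hbij : Function.Bijective (fun i => (⟨f₀ i, hmem i⟩ : {x // x ∈ C})) := by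
      rw [Fintype.bijective_iff_injective_and_card]
      constructor
      · intro a b hab
        exact hinj (congrArg Subtype.val hab)
      · rw [Fintype.card_coe, hcard, Fintype.card_fin]
    set e : Fin (m₁ + 1) ≃ {x // x ∈ C} := Equiv.ofBijective _ hbij with he
    have heval : ∀ i, (e i : V) = f₀ i := fun i => rfl
    refine ⟨hf₀.1, e, fun i => ?_, fun a b hab => ?_⟩
    · rw [heval, heval]
      exact hf₀.2.2 i
    · obtain ⟨i, rfl⟩ := e.surjective a
      obtain ⟨j, rfl⟩ := e.surjective b
      have hab' : D (f₀ i) (f₀ j) := hab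
      suffices hj : j = finRotate (m₁ + 1) i by exact ⟨i, rfl, by rw [hj]⟩
      by_contra hne
      rw [finRotate_succ_apply] at hne
      -- build a shorter cycle and contradict minimality
      have hij : i ≠ j := by
        rintro rfl
        exact hloopless _ hab'
      set d : ℕ := (i - j : Fin (m₁ + 1)).val with hd
      have hd1 : 1 ≤ d := by
        rcases Nat.eq_zero_or_pos d with h0 | h0
        · exfalso
          apply hij
          have : i - j = 0 := Fin.ext h0
          have := sub_eq_zero.mp this
          exact this
        · exact h0
      have hdm : d ≠ m₁ := by
        intro hdm
        apply hne
        have hval : (i - j : Fin (m₁+1)) = -1 := by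
          apply Fin.ext
          rw [← hd] at *
          have : ((-1 : Fin (m₁+1))).val = m₁ := by
            rw [Fin.coe_neg_one]
          rw [this, hdm]
        have : i - j = -1 := hval
        have : j = i + 1 := by
          have := sub_eq_iff_eq_add.mp this
          -- i = -1 + j
          rw [this]; abel
        exact this
      have hdlt : d < m₁ + 1 := (i - j).isLt
      have hL : d + 1 ≤ m₁ + 1 := by omega
      set gm : Fin (d + 1) → V := fun k => f₀ (j + Fin.castLE hL k) with hgm
      have hginj : Function.Injective gm := by
        intro k₁ k₂ hk
        have := hinj hk
        have := add_left_cancel this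
        exact Fin.castLE_injective hL this
      have hedge : ∀ k : Fin (d + 1), D (gm k) (gm (finRotate (d+1) k)) := by
        intro k
        rw [finRotate_succ_apply]
        rcases Nat.lt_or_ge k.val d with hk | hk
        · have hcast : Fin.castLE hL (k + 1) = Fin.castLE hL k + 1 := by
            apply Fin.ext
            simp [Fin.val_add, Nat.mod_eq_of_lt (by omega : k.val + 1 < d + 1),
              Nat.mod_eq_of_lt (by omega : k.val + 1 < m₁ + 1)]
          have hmain := hf₀.2.2 (j + Fin.castLE hL k)
          rw [finRotate_succ_apply] at hmain
          rw [hgm]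
          simp only
          rw [hcast, ← add_assoc]
          exact hmain
        · have hkd : k.val = d := by omega
          have hk1 : k + 1 = 0 := by
            apply Fin.ext
            simp [Fin.val_add, hkd]
          have hck : Fin.castLE hL k = i - j := by
            apply Fin.ext
            simp [hkd, hd]
          rw [hk1, hgm]
          simp only
          rw [hck]
          have h0 : Fin.castLE hL (0 : Fin (d+1)) = 0 := rfl
          rw [h0]
          have h1 : j + (i - j) = i := by abel
          have h2 : j + (0 : Fin (m₁+1)) = j := by simp
          rw [h1, h2]
          exact hab'
      have : d + 1 < m₁ + 1 := by omega
      exact hmin (d + 1) this ⟨gm, ⟨by omega, hginj, hedge⟩, fun k => hf₀S _⟩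
  · intro x hx
    rw [Finset.mem_coe, hC, Finset.mem_image] at hx
    obtain ⟨i, _, rfl⟩ := hx
    exact hf₀S i

lemma sum_powerset_weight {V : Type*} [DecidableEq V] (A : Finset V) (p q : ℝ) :
    ∑ S ∈ A.powerset, p ^ S.card * q ^ (A.card - S.card) = (p + q) ^ A.card := by
  rw [← Finset.prod_const, Finset.prod_add]
  apply Finset.sum_congr rfl
  intro S hS
  rw [Finset.prod_const, Finset.prod_const, Finset.card_sdiff_of_subset (Finset.mem_powerset.mp hS)]

lemma sum_powerset_weight_filter {V : Type*} [DecidableEq V] (A C : Finset V) (hC : C ⊆ A)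
    (p q : ℝ) (hpq : p + q = 1) :
    ∑ S ∈ A.powerset.filter (fun S => C ⊆ S), p ^ S.card * q ^ (A.card - S.card)
      = p ^ C.card := by
  have key : ∑ S ∈ A.powerset.filter (fun S => C ⊆ S), p ^ S.card * q ^ (A.card - S.card)
      = ∑ T ∈ (A \ C).powerset, p ^ (T.card + C.card) * q ^ ((A \ C).card - T.card) := by
    apply Finset.sum_nbij' (fun S => S \ C) (fun T => T ∪ C)
    · intro S hS
      rw [Finset.mem_filter, Finset.mem_powerset] at hS
      rw [Finset.mem_powerset]
      exact Finset.sdiff_subset_sdiff hS.1 le_rfl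
    · intro T hT
      rw [Finset.mem_powerset] at hT
      rw [Finset.mem_filter, Finset.mem_powerset]
      exact ⟨Finset.union_subset (hT.trans Finset.sdiff_subset) hC, Finset.subset_union_right⟩
    · intro S hS
      rw [Finset.mem_filter] at hS
      exact Finset.sdiff_union_of_subset hS.2
    · intro T hT
      rw [Finset.mem_powerset] at hT
      have hdisj : Disjoint T C := Finset.disjoint_of_subset_left hT Finset.sdiff_disjoint
      rw [Finset.union_sdiff_cancel_right hdisj]
    · intro S hS
      rw [Finset.mem_filter, Finset.mem_powerset] at hS
      have h1 : (S \ C).card + C.card = S.card := Finset.card_sdiff_add_card_eq_card hS.2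
      have h2 : (A \ C).card + C.card = A.card := Finset.card_sdiff_add_card_eq_card hC
      have h3 : S.card ≤ A.card := Finset.card_le_card hS.1
      have h4 : (A \ C).card - (S \ C).card = A.card - S.card := by omega
      rw [h1, h4]
  rw [key]
  have : ∀ T ∈ (A \ C).powerset, p ^ (T.card + C.card) * q ^ ((A \ C).card - T.card)
      = p ^ C.card * (p ^ T.card * q ^ ((A \ C).card - T.card)) := by
    intro T _
    ring
  rw [Finset.sum_congr rfl this, ← Finset.mul_sum, sum_powerset_weight, hpq, one_pow, mul_one]

open Finset in
lemma inducedCycle_cycleFun (D : V → V → Prop) {C : Finset V} (h : IsInducedCycleSet D C) :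
    ∃ f : Fin C.card → V, IsCycleFun D f ∧ ∀ i, f i ∈ C := by
  obtain ⟨h2, e, he, -⟩ := h
  exact ⟨fun i => (e i : V), ⟨h2, Subtype.val_injective.comp e.injective, he⟩,
    fun i => (e i).2⟩

/-- If D has n vertices, girth g and t induced directed cycles with t·g ≥ n, then
α(D) ≥ ((g−1)/g)·(n^g/(t·g))^(1/(g−1)). -/
theorem stmt_6 {V : Type*} [Fintype V] (D : V → V → Prop) (hloopless : ∀ v, ¬ D v v)
    (n g t : ℕ) (hn : n = Fintype.card V) (hg : HasGirth D g)
    (ht : t = Nat.card {S : Finset V // IsInducedCycleSet D S})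
    (htg : n ≤ t * g) :
    ∃ S : Finset V, ¬ HasCycleIn D ↑S ∧
      ((g : ℝ) - 1) / g * (((n : ℝ) ^ g / ((t : ℝ) * g)) ^ ((1 : ℝ) / ((g : ℝ) - 1)))
        ≤ (S.card : ℝ) := by
  classical
  obtain ⟨⟨fg, hfg⟩, hgirth⟩ := hg
  have hg2 : 2 ≤ g := hfg.1
  have hVne : Nonempty V := ⟨fg ⟨0, by omega⟩⟩
  -- the collection of induced cycle sets
  set 𝒞 : Finset (Finset V) := Finset.univ.filter (fun C => IsInducedCycleSet D C) with h𝒞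
  have ht' : t = 𝒞.card := by
    rw [ht, Nat.card_eq_fintype_card, Fintype.card_subtype]
  have hCprops : ∀ C ∈ 𝒞, g ≤ C.card ∧ 0 < C.card := by
    intro C hc
    rw [h𝒞, Finset.mem_filter] at hc
    obtain ⟨f, hf, -⟩ := inducedCycle_cycleFun D hc.2
    exact ⟨hgirth _ f hf, by have := hc.2.1; omega⟩
  have ht1 : 1 ≤ t := by
    have hcyc : HasCycleIn D (Set.univ : Set V) := ⟨g, fg, hfg, fun i => trivial⟩
    obtain ⟨C, hCind, -⟩ := exists_induced_of_cycle D hloopless _ hcyc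
    have : C ∈ 𝒞 := by rw [h𝒞, Finset.mem_filter]; exact ⟨Finset.mem_univ _, hCind⟩
    rw [ht']
    exact Finset.card_pos.mpr ⟨C, this⟩
  have hn2 : 2 ≤ n := by
    have : Fintype.card (Fin g) ≤ Fintype.card V := Fintype.card_le_of_injective fg hfg.2.1
    rw [hn]; rw [Fintype.card_fin] at this; omega
  -- real number setup
  have hgR : (2:ℝ) ≤ (g:ℝ) := by exact_mod_cast hg2
  have htR : (1:ℝ) ≤ (t:ℝ) := by exact_mod_cast ht1
  have hnR : (2:ℝ) ≤ (n:ℝ) := by exact_mod_cast hn2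
  have htgpos : (0:ℝ) < (t:ℝ) * g := by positivity
  set base : ℝ := (n : ℝ) / ((t:ℝ) * g) with hbase
  have hbpos : 0 < base := by positivity
  have hble : base ≤ 1 := by
    rw [hbase, div_le_one htgpos]
    exact_mod_cast htg
  set ε : ℝ := (1:ℝ) / ((g:ℝ) - 1) with hε
  have hεpos : 0 < ε := by
    rw [hε]
    apply div_pos one_pos
    linarith
  set p : ℝ := base ^ ε with hp
  have hppos : 0 < p := Real.rpow_pos_of_pos hbpos _
  have hple : p ≤ 1 := Real.rpow_le_one hbpos.le hble hεpos.le
  have hqnn : (0:ℝ) ≤ 1 - p := by linarith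
  -- p ^ (g-1) = base
  have hpow : p ^ (g - 1) = base := by
    rw [hp, ← Real.rpow_natCast (base ^ ε) (g-1), ← Real.rpow_mul hbpos.le]
    have hc : ((g - 1 : ℕ) : ℝ) = (g:ℝ) - 1 := by
      have : (1:ℕ) ≤ g := by omega
      push_cast [this]; ring
    rw [hc, hε, one_div, inv_mul_cancel₀ (by linarith), Real.rpow_one]
  have hpg : (t:ℝ) * p ^ g = p * (n:ℝ) / g := by
    have : p ^ g = p ^ (g - 1) * p := by
      rw [← pow_succ]
      congr 1
      omega
    rw [this, hpow, hbase]
    field_simp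
  -- weights
  set A : Finset V := Finset.univ with hA
  set w : Finset V → ℝ := fun S => p ^ S.card * (1 - p) ^ (A.card - S.card) with hw
  have hw0 : ∀ S, 0 ≤ w S := fun S => mul_nonneg (by positivity) (pow_nonneg hqnn _)
  have hpq : p + (1 - p) = 1 := by ring
  have hsum1 : ∑ S ∈ A.powerset, w S = 1 := by
    rw [hw]
    simp only
    rw [sum_powerset_weight, hpq, one_pow]
  have hAcard : (A.card : ℝ) = (n : ℝ) := by rw [hA, Finset.card_univ, hn]
  -- expectation of |S|
  have hE1 : ∑ S ∈ A.powerset, w S * (S.card : ℝ) = p * n := by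
    have hcard : ∀ S : Finset V, (S.card : ℝ) = ∑ v ∈ A, (if v ∈ S then (1:ℝ) else 0) := by
      intro S
      rw [Finset.sum_boole]
      congr 1
      rw [hA]
      rw [Finset.filter_mem_eq_inter, Finset.univ_inter]
    calc ∑ S ∈ A.powerset, w S * (S.card : ℝ)
        = ∑ S ∈ A.powerset, ∑ v ∈ A, (if v ∈ S then w S else 0) := by
          apply Finset.sum_congr rfl
          intro S _
          rw [hcard S, Finset.mul_sum]
          apply Finset.sum_congr rfl
          intro v _
          by_cases hv : v ∈ S <;> simp [hv]
      _ = ∑ v ∈ A, ∑ S ∈ A.powerset, (if v ∈ S then w S else 0) := Finset.sum_comm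
      _ = ∑ v ∈ A, p := by
          apply Finset.sum_congr rfl
          intro v _
          have : ∀ S : Finset V, (v ∈ S) ↔ ({v} : Finset V) ⊆ S := by
            intro S; rw [Finset.singleton_subset_iff]
          calc ∑ S ∈ A.powerset, (if v ∈ S then w S else 0)
              = ∑ S ∈ A.powerset.filter (fun S => ({v} : Finset V) ⊆ S), w S := by
                rw [Finset.sum_filter]
                apply Finset.sum_congr rfl
                intro S _
                simp only [Finset.singleton_subset_iff]
            _ = p := by
                rw [sum_powerset_weight_filter A {v} (by simp [hA]) p (1-p) hpq,
                  Finset.card_singleton, pow_one]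
      _ = p * n := by
          rw [Finset.sum_const, hA, Finset.card_univ, ← hn, nsmul_eq_mul, mul_comm]
  -- number of induced cycles inside S
  set c : Finset V → ℕ := fun S => (𝒞.filter (fun C => C ⊆ S)).card with hc
  have hE2 : ∑ S ∈ A.powerset, w S * (c S : ℝ) = ∑ C ∈ 𝒞, p ^ C.card := by
    have hcard : ∀ S : Finset V, ((c S : ℝ)) = ∑ C ∈ 𝒞, (if C ⊆ S then (1:ℝ) else 0) := by
      intro S
      rw [hc]
      simp only
      rw [Finset.sum_boole]
    calc ∑ S ∈ A.powerset, w S * (c S : ℝ)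
        = ∑ S ∈ A.powerset, ∑ C ∈ 𝒞, (if C ⊆ S then w S else 0) := by
          apply Finset.sum_congr rfl
          intro S _
          rw [hcard S, Finset.mul_sum]
          apply Finset.sum_congr rfl
          intro C _
          by_cases hv : C ⊆ S <;> simp [hv]
      _ = ∑ C ∈ 𝒞, ∑ S ∈ A.powerset, (if C ⊆ S then w S else 0) := Finset.sum_comm
      _ = ∑ C ∈ 𝒞, p ^ C.card := by
          apply Finset.sum_congr rfl
          intro C _
          rw [← Finset.sum_filter]
          exact sum_powerset_weight_filter A C (Finset.subset_univ C) p (1-p) hpq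
  have hE3 : ∑ C ∈ 𝒞, p ^ C.card ≤ (t:ℝ) * p ^ g := by
    calc ∑ C ∈ 𝒞, p ^ C.card ≤ ∑ C ∈ 𝒞, p ^ g := by
          apply Finset.sum_le_sum
          intro C hC
          exact pow_le_pow_of_le_one hppos.le hple (hCprops C hC).1
      _ = (t:ℝ) * p ^ g := by
          rw [Finset.sum_const, nsmul_eq_mul, ht']
  -- find a good S
  set B : ℝ := p * n - (t:ℝ) * p ^ g with hB
  have hgood : ∃ S ∈ A.powerset, B ≤ (S.card : ℝ) - (c S : ℝ) := by
    by_contra hcon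
    push_neg at hcon
    have hEsum : ∑ S ∈ A.powerset, w S * ((S.card : ℝ) - (c S : ℝ)) ≥ B := by
      have : ∑ S ∈ A.powerset, w S * ((S.card : ℝ) - (c S : ℝ))
          = (∑ S ∈ A.powerset, w S * (S.card : ℝ)) - ∑ S ∈ A.powerset, w S * (c S : ℝ) := by
        rw [← Finset.sum_sub_distrib]
        apply Finset.sum_congr rfl
        intro S _
        ring
      rw [this, hE1, hE2, hB]
      linarith [hE3]
    have hlt : ∑ S ∈ A.powerset, w S * ((S.card : ℝ) - (c S : ℝ))
        < ∑ S ∈ A.powerset, w S * B := by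
      apply Finset.sum_lt_sum
      · intro S hS
        exact mul_le_mul_of_nonneg_left (hcon S hS).le (hw0 S)
      · refine ⟨A, Finset.mem_powerset_self A, ?_⟩
        have hwA : 0 < w A := by
          rw [hw]
          simp only
          rw [Nat.sub_self, pow_zero, mul_one]
          positivity
        exact mul_lt_mul_of_pos_left (hcon A (Finset.mem_powerset_self A)) hwA
    rw [← Finset.sum_mul, hsum1, one_mul] at hlt
    linarith
  obtain ⟨S, -, hSgood⟩ := hgood
  -- delete one vertex from each induced cycle inside S
  set pick : Finset V → V := fun C => if h : C.Nonempty then h.choose else Classical.arbitrary V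
    with hpick
  have hpickmem : ∀ C : Finset V, C.Nonempty → pick C ∈ C := by
    intro C hC
    rw [hpick]
    simp only [dif_pos hC]
    exact hC.choose_spec
  set R : Finset V := (𝒞.filter (fun C => C ⊆ S)).image pick with hR
  have hRcard : R.card ≤ c S := by
    rw [hR, hc]
    exact Finset.card_image_le
  refine ⟨S \ R, ?_, ?_⟩
  · intro hcyc
    obtain ⟨C, hCind, hCsub⟩ := exists_induced_of_cycle D hloopless _ hcyc
    have hCS : C ⊆ S \ R := by
      intro x hx
      exact_mod_cast hCsub hx
    have hC𝒞 : C ∈ 𝒞.filter (fun C => C ⊆ S) := by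
      rw [Finset.mem_filter]
      refine ⟨?_, hCS.trans Finset.sdiff_subset⟩
      rw [h𝒞, Finset.mem_filter]
      exact ⟨Finset.mem_univ _, hCind⟩
    have hCne : C.Nonempty := Finset.card_pos.mp (by have := hCind.1; omega)
    have h1 : pick C ∈ R := by
      rw [hR]
      exact Finset.mem_image_of_mem _ hC𝒞
    have h2 : pick C ∈ S \ R := hCS (hpickmem C hCne)
    rw [Finset.mem_sdiff] at h2
    exact h2.2 h1
  · -- cardinality bound
    have h1 : S.card ≤ (S \ R).card + R.card := Finset.card_le_card_sdiff_add_card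
    have h2 : ((S \ R).card : ℝ) ≥ (S.card : ℝ) - (c S : ℝ) := by
      have := hRcard
      have h1R : (S.card : ℝ) ≤ ((S \ R).card : ℝ) + (R.card : ℝ) := by exact_mod_cast h1
      have hRR : ((R.card : ℝ)) ≤ (c S : ℝ) := by exact_mod_cast hRcard
      linarith
    have hfinal : ((g : ℝ) - 1) / g * (((n : ℝ) ^ g / ((t : ℝ) * g)) ^ ((1:ℝ)/((g:ℝ)-1))) = B := by
      have hng : (n:ℝ) ^ g / ((t:ℝ) * g) = (n:ℝ) ^ (g-1) * base := by
        rw [hbase]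
        have : (n:ℝ) ^ g = (n:ℝ) ^ (g-1) * (n:ℝ) := by
          rw [← pow_succ]
          congr 1
          omega
        rw [this]
        ring
      have hnn : (0:ℝ) ≤ (n:ℝ) ^ (g-1) := by positivity
      rw [hng, Real.mul_rpow hnn hbpos.le, ← hε, ← hp]
      have hnpow : ((n:ℝ) ^ (g-1) : ℝ) ^ ε = (n:ℝ) := by
        rw [← Real.rpow_natCast (n:ℝ) (g-1), ← Real.rpow_mul (by positivity)]
        have hcc : ((g - 1 : ℕ) : ℝ) = (g:ℝ) - 1 := by
          have : (1:ℕ) ≤ g := by omega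
          push_cast [this]; ring
        rw [hcc, hε, one_div, mul_inv_cancel₀ (by linarith), Real.rpow_one]
      rw [hnpow, hB, hpg]
      field_simp
    rw [hfinal, ← ge_iff_le]
    exact le_trans hSgood h2
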